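/- Let K ⊆ R^n be an absolutely symmetric convex body containing the segment [−e_1, e_1], and let X = (X_1,...,X_n) be uniformly distributed in K. Then Var(X_1) ≥ 1/(n+1)². -/

import Mathlib

open MeasureTheory

section auxiliary
open Set Pointwise

lemma aux_pow3 (k : ℕ) (hk : 0 < k) : (1 + 1/(k:ℝ))^k ≤ 3 := by
  have hk' : (0:ℝ) < k := by exact_mod_cast hk
  have h1 : (1 + 1/(k:ℝ)) ≤ Real.exp (1/k) := by
    have := Real.add_one_le_exp (1/(k:ℝ)); linarith
  have h2 : (1 + 1/(k:ℝ))^k ≤ (Real.exp (1/k))^k := by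
    apply pow_le_pow_left₀ (by positivity) h1
  have h3 : (Real.exp (1/(k:ℝ)))^k = Real.exp 1 := by
    rw [← Real.exp_nat_mul]; congr 1; field_simp
  have := Real.exp_one_lt_d9
  calc (1 + 1/(k:ℝ))^k ≤ Real.exp 1 := by rw [← h3]; exact h2
    _ ≤ 3 := by linarith

lemma aux_a_ge (m : ℕ) : (1:ℝ)/3 ≤ (((m:ℝ)+1)/((m:ℝ)+2))^(m+1) := by
  have hm1 : (0:ℝ) < (m:ℝ)+1 := by positivity
  have hm2 : (0:ℝ) < (m:ℝ)+2 := by positivity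
  have key : (1 + 1/((m:ℝ)+1))^(m+1) ≤ 3 := by
    have := aux_pow3 (m+1) (Nat.succ_pos m)
    push_cast at this ⊢
    convert this using 3 <;> ring
  have h1 : (((m:ℝ)+2)/((m:ℝ)+1))^(m+1) ≤ 3 := by
    have : ((m:ℝ)+2)/((m:ℝ)+1) = 1 + 1/((m:ℝ)+1) := by field_simp; ring
    rw [this]; exact key
  have hpos : (0:ℝ) < (((m:ℝ)+2)/((m:ℝ)+1))^(m+1) := by positivity
  have hinv : (((m:ℝ)+1)/((m:ℝ)+2))^(m+1) = ((((m:ℝ)+2)/((m:ℝ)+1))^(m+1))⁻¹ := by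
    rw [← inv_pow]; congr 1; rw [inv_div]
  rw [hinv, le_inv_comm₀ (by norm_num) hpos]
  calc (((m:ℝ)+2)/((m:ℝ)+1))^(m+1) ≤ 3 := h1
    _ = (1/3:ℝ)⁻¹ := by norm_num

lemma aux_J (m : ℕ) :
    ∫ t in (1/((m:ℝ)+2))..1, (t^2 - (1/((m:ℝ)+2))^2) * (1-t)^m
      = 4*(((m:ℝ)+1)/((m:ℝ)+2))^(m+1) / (((m:ℝ)+2)^2*((m:ℝ)+3)) := by
  set s : ℝ := 1/((m:ℝ)+2) with hs
  set a : ℝ := ((m:ℝ)+1)/((m:ℝ)+2) with ha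
  have hm2 : (0:ℝ) < (m:ℝ)+2 := by positivity
  have h1 : ∫ t in s..1, (t^2 - s^2) * (1-t)^m
      = ∫ u in (1-(1:ℝ))..(1-s), ((1-u)^2 - s^2) * u^m := by
    rw [← intervalIntegral.integral_comp_sub_left (fun u => ((1-u)^2 - s^2) * u^m) 1]
    congr 1; ext t; ring_nf
  have ha1 : 1 - s = a := by rw [hs, ha]; field_simp; ring
  have h2 : ∫ u in (0:ℝ)..a, ((1-u)^2 - s^2) * u^m
      = ∫ u in (0:ℝ)..a, ((1-s^2) * u^m - 2*u^(m+1) + u^(m+2)) := by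
    congr 1; ext u; ring
  have i1 : IntervalIntegrable (fun u : ℝ => (1-s^2) * u^m) volume 0 a :=
    (intervalIntegral.intervalIntegrable_pow m).const_mul _
  have i2 : IntervalIntegrable (fun u : ℝ => 2*u^(m+1)) volume 0 a :=
    (intervalIntegral.intervalIntegrable_pow (m+1)).const_mul _
  have i3 : IntervalIntegrable (fun u : ℝ => u^(m+2)) volume 0 a :=
    intervalIntegral.intervalIntegrable_pow (m+2)
  have h3 : ∫ u in (0:ℝ)..a, ((1-s^2) * u^m - 2*u^(m+1) + u^(m+2))
      = (1-s^2) * (a^(m+1)/((m:ℝ)+1)) - 2*(a^(m+2)/((m:ℝ)+2)) + a^(m+3)/((m:ℝ)+3) := by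
    rw [intervalIntegral.integral_add (i1.sub i2) i3, intervalIntegral.integral_sub i1 i2,
      intervalIntegral.integral_const_mul, intervalIntegral.integral_const_mul,
      integral_pow, integral_pow, integral_pow]
    push_cast; ring
  rw [h1, sub_self, ha1, h2, h3]
  -- algebra
  have hb : (0:ℝ) < a := by rw [ha]; positivity
  have e1 : a^(m+2) = a^(m+1) * a := by ring
  have e2 : a^(m+3) = a^(m+1) * a^2 := by ring
  rw [e1, e2]
  have hs2 : s = 1/((m:ℝ)+2) := hs
  generalize a^(m+1) = b
  rw [hs2, ha]
  have hm1 : ((m:ℝ)+1) ≠ 0 := by positivity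
  have hm3 : ((m:ℝ)+3) ≠ 0 := by positivity
  field_simp
  ring

lemma aux_half (m : ℕ) (F : ℝ → ℝ) (hF0 : ∀ t, 0 ≤ F t) (hFle : ∀ t, F t ≤ F 0)
    (hFge : ∀ t ∈ Icc (0:ℝ) 1, (1-t)^m * F 0 ≤ F t)
    (hInt : IntegrableOn (fun t => (t^2 - (1/((m:ℝ)+2))^2) * F t) (Ioi 0)) :
    0 ≤ ∫ t in Ioi (0:ℝ), (t^2 - (1/((m:ℝ)+2))^2) * F t := by
  set s : ℝ := 1/((m:ℝ)+2) with hs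
  set c : ℝ := s^2 with hc
  have hm2 : (0:ℝ) < (m:ℝ)+2 := by positivity
  have hs0 : 0 < s := by rw [hs]; positivity
  have hs1 : s ≤ 1 := by
    rw [hs]; rw [div_le_one hm2]; linarith
  have hc1 : c ≤ 1 := by
    rw [hc]; calc s^2 ≤ 1^2 := by apply pow_le_pow_left₀ hs0.le hs1
      _ = 1 := one_pow 2
  set G : ℝ → ℝ := fun t => (t^2 - c) * F t with hG
  -- set splits
  have hsplit1 : Ioc (0:ℝ) 1 ∪ Ioi (1:ℝ) = Ioi 0 := Ioc_union_Ioi_eq_Ioi zero_le_one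
  have hsplit2 : Ioc (0:ℝ) s ∪ Ioc s 1 = Ioc 0 1 := Ioc_union_Ioc_eq_Ioc hs0.le hs1
  have hIntA : IntegrableOn G (Ioc 0 s) := hInt.mono_set (fun x hx => hx.1)
  have hIntB : IntegrableOn G (Ioc s 1) := hInt.mono_set (fun x hx => lt_of_lt_of_le hs0 hx.1.le)
  have hIntAB : IntegrableOn G (Ioc 0 1) := hInt.mono_set (fun x hx => hx.1)
  have hIntC : IntegrableOn G (Ioi 1) := hInt.mono_set (fun x hx => mem_Ioi.mpr (lt_trans one_pos (mem_Ioi.mp hx)))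
  have heq1 : ∫ t in Ioi (0:ℝ), G t = (∫ t in Ioc (0:ℝ) 1, G t) + ∫ t in Ioi (1:ℝ), G t := by
    rw [← hsplit1, setIntegral_union (Ioc_disjoint_Ioi le_rfl) measurableSet_Ioi hIntAB hIntC]
  have heq2 : ∫ t in Ioc (0:ℝ) 1, G t = (∫ t in Ioc (0:ℝ) s, G t) + ∫ t in Ioc s 1, G t := by
    rw [← hsplit2, setIntegral_union (by rw [Set.disjoint_left]; rintro x ⟨_, h1⟩ ⟨h2, _⟩; linarith)
      measurableSet_Ioc hIntA hIntB]
  -- piece C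
  have hC : 0 ≤ ∫ t in Ioi (1:ℝ), G t := by
    apply setIntegral_nonneg measurableSet_Ioi
    intro t ht
    have h1 : (1:ℝ) < t := ht
    have : c ≤ t^2 := by nlinarith
    exact mul_nonneg (by linarith) (hF0 t)
  -- piece A
  have contA : IntegrableOn (fun t : ℝ => (t^2 - c) * F 0) (Ioc 0 s) :=
    (((continuous_pow 2).sub continuous_const).mul continuous_const).integrableOn_Ioc
  have hA : F 0 * (s^3/3 - c*s) ≤ ∫ t in Ioc (0:ℝ) s, G t := by
    have step : ∫ t in Ioc (0:ℝ) s, (t^2 - c) * F 0 ≤ ∫ t in Ioc (0:ℝ) s, G t := by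
      apply setIntegral_mono_on contA hIntA measurableSet_Ioc
      intro t ht
      have h1 : t^2 ≤ c := by
        rw [hc]; apply pow_le_pow_left₀ ht.1.le ht.2
      exact mul_le_mul_of_nonpos_left (hFle t) (by linarith)
    have comp : ∫ t in Ioc (0:ℝ) s, (t^2 - c) * F 0 = F 0 * (s^3/3 - c*s) := by
      rw [← intervalIntegral.integral_of_le hs0.le, intervalIntegral.integral_mul_const _ _,
        intervalIntegral.integral_sub (intervalIntegral.intervalIntegrable_pow 2)
          (intervalIntegrable_const), integral_pow, intervalIntegral.integral_const]
      simp only [smul_eq_mul]; push_cast; ring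
    linarith
  -- piece B
  have contB : IntegrableOn (fun t : ℝ => (t^2 - c) * ((1-t)^m * F 0)) (Ioc s 1) :=
    (((continuous_pow 2).sub continuous_const).mul
      (((continuous_const.sub continuous_id).pow m).mul continuous_const)).integrableOn_Ioc
  have hB : (∫ t in s..1, (t^2 - c) * (1-t)^m) * F 0 ≤ ∫ t in Ioc s 1, G t := by
    have step : ∫ t in Ioc s 1, (t^2 - c) * ((1-t)^m * F 0) ≤ ∫ t in Ioc s 1, G t := by
      apply setIntegral_mono_on contB hIntB measurableSet_Ioc
      intro t ht
      have h1 : c ≤ t^2 := by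
        rw [hc]; apply pow_le_pow_left₀ hs0.le ht.1.le
      exact mul_le_mul_of_nonneg_left (hFge t ⟨le_trans hs0.le ht.1.le, ht.2⟩) (by linarith)
    have comp : ∫ t in Ioc s 1, (t^2 - c) * ((1-t)^m * F 0)
        = (∫ t in s..1, (t^2 - c) * (1-t)^m) * F 0 := by
      rw [intervalIntegral.integral_of_le hs1]
      rw [← MeasureTheory.integral_mul_const]
      congr 1; ext t; ring
    linarith
  -- numeric
  have hJ : (2/3) * s^3 ≤ ∫ t in s..1, (t^2 - c) * (1-t)^m := by
    rw [hc, hs, aux_J m]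
    have hb := aux_a_ge m
    set b : ℝ := (((m:ℝ)+1)/((m:ℝ)+2))^(m+1) with hbdef
    rw [← sub_nonneg]
    have key : 4*b / (((m:ℝ)+2)^2*((m:ℝ)+3)) - 2/3 * (1/((m:ℝ)+2))^3
        = (4*b*((m:ℝ)+2) - 2/3*((m:ℝ)+3)) / (((m:ℝ)+2)^3*((m:ℝ)+3)) := by
      field_simp
    rw [key]
    apply div_nonneg _ (by positivity)
    nlinarith [hb]
  have hF00 := hF0 0
  calc (0:ℝ) ≤ F 0 * (s^3/3 - c*s) + (∫ t in s..1, (t^2 - c) * (1-t)^m) * F 0 + 0 := by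
        have : F 0 * (s^3/3 - c*s) + (∫ t in s..1, (t^2 - c) * (1-t)^m) * F 0
            = ((∫ t in s..1, (t^2 - c) * (1-t)^m) - (2/3)*s^3) * F 0 := by rw [hc]; ring
        rw [add_zero, this]
        apply mul_nonneg (by linarith) hF00
    _ ≤ (∫ t in Ioc (0:ℝ) s, G t) + (∫ t in Ioc s 1, G t) + ∫ t in Ioi (1:ℝ), G t := by
        gcongr
    _ = ∫ t in Ioi (0:ℝ), G t := by rw [heq1, heq2]

lemma key_fubini (m : ℕ) (K : Set (Fin (m+1) → ℝ)) (hKm : MeasurableSet K)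
    (R : ℝ) (hR : ∀ x ∈ K, ‖x‖ ≤ R) (hfin : volume K ≠ ⊤)
    (g : ℝ → ℝ) (hg : Continuous g) :
    ∫ x in K, g (x 0) = ∫ t : ℝ, g t * (volume {y : Fin m → ℝ | Fin.cons t y ∈ K}).toReal := by
  classical
  set e := MeasurableEquiv.piFinSuccAbove (fun _ : Fin (m+1) => ℝ) 0 with he
  have hep : MeasurePreserving e volume volume :=
    volume_preserving_piFinSuccAbove (fun _ : Fin (m+1) => ℝ) 0
  set K' : Set (ℝ × (Fin m → ℝ)) := ⇑e.symm ⁻¹' K with hK'def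
  have hK'm : MeasurableSet K' := e.symm.measurable hKm
  have hsymm : ∀ (t : ℝ) (y : Fin m → ℝ), e.symm (t, y) = Fin.cons t y := by
    intro t y
    show (MeasurableEquiv.piFinSuccAbove (fun _ : Fin (m+1) => ℝ) 0).symm (t, y) = _
    simp [MeasurableEquiv.piFinSuccAbove, Fin.insertNth_zero']
    rfl
  have hKK' : K = ⇑e ⁻¹' K' := by
    ext x; simp [hK'def]
  have hsec : ∀ t : ℝ, Prod.mk t ⁻¹' K' = {y : Fin m → ℝ | Fin.cons t y ∈ K} := by
    intro t; ext y; simp [hK'def, hsymm]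
  -- bound on K'
  obtain ⟨C, hC⟩ : ∃ C, ∀ t ∈ Icc (-R) R, ‖g t‖ ≤ C :=
    isCompact_Icc.exists_bound_of_continuousOn hg.continuousOn
  have hmemK' : ∀ p ∈ K', |p.1| ≤ R := by
    rintro ⟨t, y⟩ hp
    have hx : Fin.cons t y ∈ K := by rwa [hK'def, mem_preimage, hsymm] at hp
    have := hR _ hx
    calc |t| = ‖(Fin.cons t y : Fin (m+1) → ℝ) 0‖ := by rw [Fin.cons_zero]; rfl
      _ ≤ ‖(Fin.cons t y : Fin (m+1) → ℝ)‖ := norm_le_pi_norm _ 0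
      _ ≤ R := this
  have hvolK' : volume K' ≠ ⊤ := by
    rw [hK'def, (hep.symm e).measure_preimage hKm.nullMeasurableSet]
    exact hfin
  -- integrability on the product space
  have hint : Integrable (K'.indicator (fun p : ℝ × (Fin m → ℝ) => g p.1)) volume := by
    rw [integrable_indicator_iff hK'm]
    apply Measure.integrableOn_of_bounded hvolK'
    · exact (hg.comp continuous_fst).aestronglyMeasurable
    · filter_upwards [ae_restrict_mem hK'm] with p hp
      exact hC _ (abs_le.mp (hmemK' p hp))
  -- step 1 : transfer to product
  have step1 : ∫ x in K, g (x 0) = ∫ p in K', g p.1 := by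
    rw [hKK']
    have := (hep.restrict_preimage hK'm).integral_comp e.measurableEmbedding
      (fun p : ℝ × (Fin m → ℝ) => g p.1)
    rw [← this]
    rfl
  rw [step1, ← integral_indicator hK'm]
  have hprod : (volume : Measure (ℝ × (Fin m → ℝ))) = (volume : Measure ℝ).prod volume :=
    Measure.volume_eq_prod _ _
  rw [hprod] at hint ⊢
  rw [MeasureTheory.integral_prod _ hint]
  congr 1
  ext t
  have : ∀ y, K'.indicator (fun p : ℝ × (Fin m → ℝ) => g p.1) (t, y)
      = (Prod.mk t ⁻¹' K').indicator (fun _ => g t) y := by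
    intro y
    by_cases h : (t, y) ∈ K' <;> simp [indicator, h]
  simp_rw [this]
  rw [integral_indicator_const _ (measurable_prodMk_left hK'm)]
  rw [hsec t]
  rw [smul_eq_mul, mul_comm]
  rfl

end auxiliary

section mainthm
open Set Pointwise

/-- if `K ⊆ ℝⁿ` is an absolutely symmetric convex body containing the
segment `[-e₁, e₁]` and `X` is uniformly distributed in `K`, then `Var(X₁) ≥ 1/(n+1)²`. -/
theorem stmt10 {n : ℕ} (hn : 0 < n) (K : Set (Fin n → ℝ))
    (hKconv : Convex ℝ K) (hKcomp : IsCompact K) (hKint : (interior K).Nonempty)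
    (hKsym : ∀ ε : Fin n → ℝ, (∀ i, ε i = 1 ∨ ε i = -1) →
      ∀ x ∈ K, (fun i => ε i * x i) ∈ K)
    (e₁ : Fin n → ℝ) (he₁ : e₁ = Pi.single (⟨0, hn⟩ : Fin n) (1 : ℝ))
    (hseg : segment ℝ (-e₁) e₁ ⊆ K) :
    (1 : ℝ) / ((n : ℝ) + 1) ^ 2 ≤
      (∫ x, (x ⟨0, hn⟩) ^ 2 ∂((volume K)⁻¹ • volume.restrict K))
        - (∫ x, x ⟨0, hn⟩ ∂((volume K)⁻¹ • volume.restrict K)) ^ 2 := by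
  classical
  obtain ⟨m, rfl⟩ : ∃ m, n = m + 1 := ⟨n - 1, (Nat.succ_pred_eq_of_pos hn).symm⟩
  have hidx : (⟨0, hn⟩ : Fin (m+1)) = 0 := rfl
  rw [hidx]
  set c : ℝ := (1/((m:ℝ)+2))^2 with hc
  have hKm : MeasurableSet K := hKcomp.isClosed.measurableSet
  obtain ⟨R₀, hR₀⟩ := isBounded_iff_forall_norm_le.1 hKcomp.isBounded
  set R : ℝ := max R₀ 1 with hRdef
  have hRpos : (0:ℝ) < R := lt_of_lt_of_le one_pos (le_max_right _ _)
  have hR : ∀ x ∈ K, ‖x‖ ≤ R := fun x hx => le_trans (hR₀ x hx) (le_max_left _ _)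
  have hfin : volume K ≠ ⊤ := hKcomp.measure_lt_top.ne
  have hV0 : volume K ≠ 0 := by
    intro h
    have h1 : 0 < volume (interior K) := isOpen_interior.measure_pos volume hKint
    have h2 : volume (interior K) ≤ volume K := measure_mono interior_subset
    rw [h] at h2
    exact absurd (le_antisymm h2 (zero_le)) (ne_of_gt h1)
  -- sections
  set S : ℝ → Set (Fin m → ℝ) := fun t => {y | Fin.cons t y ∈ K} with hS
  set F : ℝ → ℝ := fun t => (volume (S t)).toReal with hF
  -- e₁ as cons
  have he1cons : e₁ = Fin.cons (1:ℝ) (0 : Fin m → ℝ) := by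
    rw [he₁, hidx]
    funext i
    refine Fin.cases ?_ (fun j => ?_) i
    · simp
    · simp [Pi.single_eq_of_ne (Fin.succ_ne_zero j)]
  have hne1cons : -e₁ = Fin.cons (-1:ℝ) (0 : Fin m → ℝ) := by
    rw [he1cons]
    funext i
    refine Fin.cases ?_ (fun j => ?_) i <;> simp
  have he1K : Fin.cons (1:ℝ) (0 : Fin m → ℝ) ∈ K := by
    rw [← he1cons]; exact hseg (right_mem_segment ℝ _ _)
  have hne1K : Fin.cons (-1:ℝ) (0 : Fin m → ℝ) ∈ K := by
    rw [← hne1cons]; exact hseg (left_mem_segment ℝ _ _)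
  -- flip
  have hflip : ∀ (t : ℝ) (y : Fin m → ℝ), y ∈ S t → y ∈ S (-t) := by
    intro t y hy
    have hεprop : ∀ i, (Fin.cons (-1:ℝ) (fun _ => (1:ℝ)) : Fin (m+1) → ℝ) i = 1 ∨
        (Fin.cons (-1:ℝ) (fun _ => (1:ℝ)) : Fin (m+1) → ℝ) i = -1 := by
      intro i
      refine Fin.cases ?_ (fun j => ?_) i <;> simp
    have hmem := hKsym _ hεprop _ hy
    have heq : (fun i => (Fin.cons (-1:ℝ) (fun _ => (1:ℝ)) : Fin (m+1) → ℝ) i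
        * (Fin.cons t y : Fin (m+1) → ℝ) i) = Fin.cons (-t) y := by
      funext i
      refine Fin.cases ?_ (fun j => ?_) i <;> simp
    rw [heq] at hmem
    exact hmem
  have hSsub : ∀ t : ℝ, S t ⊆ S 0 := by
    intro t y hy
    have h2 : y ∈ S (-t) := hflip t y hy
    have h3 := hKconv hy h2 (by norm_num : (0:ℝ) ≤ 1/2) (by norm_num : (0:ℝ) ≤ 1/2)
      (by norm_num)
    have heq : (1/2 : ℝ) • (Fin.cons t y : Fin (m+1) → ℝ)
        + (1/2 : ℝ) • (Fin.cons (-t) y : Fin (m+1) → ℝ) = Fin.cons 0 y := by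
      funext i
      refine Fin.cases ?_ (fun j => ?_) i
      · simp only [Pi.add_apply, Pi.smul_apply, Fin.cons_zero, smul_eq_mul]; ring
      · simp only [Pi.add_apply, Pi.smul_apply, Fin.cons_succ, smul_eq_mul]; ring
    rw [heq] at h3
    exact h3
  -- cone
  have hcone : ∀ σ : ℝ, (Fin.cons σ (0 : Fin m → ℝ) ∈ K) → ∀ t ∈ Icc (0:ℝ) 1,
      ∀ y ∈ S 0, (1-t) • y ∈ S (σ * t) := by
    intro σ hσ t ht y hy
    have h3 := hKconv hy hσ (by linarith [ht.2] : (0:ℝ) ≤ 1 - t) ht.1 (by ring)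
    have heq : (1-t) • (Fin.cons 0 y : Fin (m+1) → ℝ)
        + t • (Fin.cons σ (0 : Fin m → ℝ) : Fin (m+1) → ℝ) = Fin.cons (σ*t) ((1-t) • y) := by
      funext i
      refine Fin.cases ?_ (fun j => ?_) i
      · simp only [Pi.add_apply, Pi.smul_apply, Fin.cons_zero, smul_eq_mul]; ring
      · simp only [Pi.add_apply, Pi.smul_apply, Fin.cons_succ, Pi.zero_apply, smul_eq_mul,
          Pi.smul_apply]; ring
    rw [heq] at h3
    exact h3
  -- measurability
  have hconsmeas : Measurable (fun p : ℝ × (Fin m → ℝ) => (Fin.cons p.1 p.2 : Fin (m+1) → ℝ)) := by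
    rw [measurable_pi_iff]
    intro i
    refine Fin.cases ?_ (fun j => ?_) i
    · simpa using measurable_fst
    · simp only [Fin.cons_succ]
      exact (measurable_pi_apply j).comp measurable_snd
  have hKprodm : MeasurableSet {p : ℝ × (Fin m → ℝ) | Fin.cons p.1 p.2 ∈ K} :=
    hconsmeas hKm
  have hSm : ∀ t : ℝ, MeasurableSet (S t) := by
    intro t
    have : S t = Prod.mk t ⁻¹' {p : ℝ × (Fin m → ℝ) | Fin.cons p.1 p.2 ∈ K} := by
      ext y; simp [hS]
    rw [this]
    exact measurable_prodMk_left hKprodm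
  have hFmeas : Measurable F := by
    have h1 : Measurable (fun t => volume (Prod.mk t ⁻¹' {p : ℝ × (Fin m → ℝ) | Fin.cons p.1 p.2 ∈ K})) :=
      measurable_measure_prodMk_left hKprodm
    have hseteq : ∀ t : ℝ, Prod.mk t ⁻¹' {p : ℝ × (Fin m → ℝ) | Fin.cons p.1 p.2 ∈ K} = S t := by
      intro t; ext y; simp [hS]
    have h2 : F = fun t => (volume (Prod.mk t ⁻¹' {p : ℝ × (Fin m → ℝ) | Fin.cons p.1 p.2 ∈ K})).toReal := by
      funext t; rw [hseteq t]
    rw [h2]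
    exact h1.ennreal_toReal
  -- bounds on sections
  have hSy : ∀ (t : ℝ) (y : Fin m → ℝ), y ∈ S t → |t| ≤ R ∧ ‖y‖ ≤ R := by
    intro t y hy
    have hx : ‖(Fin.cons t y : Fin (m+1) → ℝ)‖ ≤ R := hR _ hy
    constructor
    · calc |t| = ‖(Fin.cons t y : Fin (m+1) → ℝ) 0‖ := by rw [Fin.cons_zero]; rfl
        _ ≤ ‖(Fin.cons t y : Fin (m+1) → ℝ)‖ := norm_le_pi_norm _ 0
        _ ≤ R := hx
    · rw [pi_norm_le_iff_of_nonneg hRpos.le]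
      intro j
      calc ‖y j‖ = ‖(Fin.cons t y : Fin (m+1) → ℝ) j.succ‖ := by rw [Fin.cons_succ]
        _ ≤ ‖(Fin.cons t y : Fin (m+1) → ℝ)‖ := norm_le_pi_norm _ j.succ
        _ ≤ R := hx
  have hS0fin : volume (S 0) ≠ ⊤ := by
    have hsub : S 0 ⊆ Metric.closedBall 0 R := by
      intro y hy
      rw [Metric.mem_closedBall, dist_zero_right]
      exact (hSy 0 y hy).2
    exact (lt_of_le_of_lt (measure_mono hsub) (Metric.isBounded_closedBall.measure_lt_top)).ne
  have hStfin : ∀ t, volume (S t) ≠ ⊤ :=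
    fun t => (lt_of_le_of_lt (measure_mono (hSsub t)) (lt_of_le_of_ne le_top hS0fin |>.lt_top)).ne
  -- F properties
  have hF0 : ∀ t, 0 ≤ F t := fun t => ENNReal.toReal_nonneg
  have hFle : ∀ t, F t ≤ F 0 := fun t => ENNReal.toReal_mono hS0fin (measure_mono (hSsub t))
  have hFsupp : ∀ t, R < |t| → F t = 0 := by
    intro t ht
    have : S t = ∅ := by
      rw [eq_empty_iff_forall_notMem]
      intro y hy
      exact absurd (hSy t y hy).1 (not_le.mpr ht)
    simp [hF, this]
  have hFeven : ∀ t, F (-t) = F t := by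
    intro t
    have : S (-t) = S t := by
      apply Subset.antisymm
      · intro y hy
        have := hflip (-t) y hy
        rwa [neg_neg] at this
      · exact fun y hy => hflip t y hy
    simp [hF, this]
  have hconeF : ∀ σ : ℝ, (Fin.cons σ (0 : Fin m → ℝ) ∈ K) → ∀ t ∈ Icc (0:ℝ) 1,
      (1-t)^m * F 0 ≤ F (σ * t) := by
    intro σ hσ t ht
    have hsub : (1-t) • S 0 ⊆ S (σ * t) := by
      rintro z ⟨y, hy, rfl⟩
      exact hcone σ hσ t ht y hy
    have hvol : volume ((1-t) • S 0) = ENNReal.ofReal ((1-t)^m) * volume (S 0) := by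
      rw [Measure.addHaar_smul volume (1-t) (S 0)]
      congr 2
      rw [abs_of_nonneg (pow_nonneg (by linarith [ht.2] : (0:ℝ) ≤ 1-t) _)]
      congr 1
      exact Module.finrank_fin_fun ℝ
    have h1 : ENNReal.ofReal ((1-t)^m) * volume (S 0) ≤ volume (S (σ * t)) := by
      rw [← hvol]; exact measure_mono hsub
    have h2 := ENNReal.toReal_mono (hStfin (σ * t)) h1
    rw [ENNReal.toReal_mul, ENNReal.toReal_ofReal (pow_nonneg (by linarith [ht.2] : (0:ℝ) ≤ 1-t) m)] at h2
    exact h2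
  -- integrability
  have hGint : ∀ g : ℝ → ℝ, Continuous g → Integrable (fun t => g t * F t) volume := by
    intro g hg
    obtain ⟨C, hC⟩ : ∃ C, ∀ t ∈ Icc (-R) R, ‖g t‖ ≤ C :=
      isCompact_Icc.exists_bound_of_continuousOn hg.continuousOn
    have hC0 : 0 ≤ C := le_trans (norm_nonneg _) (hC 0 (by constructor <;> linarith))
    apply Integrable.mono' (g := (Icc (-R) R).indicator (fun _ => C * F 0))
    · rw [integrable_indicator_iff measurableSet_Icc]
      exact integrableOn_const measure_Icc_lt_top.ne
    · exact (hg.measurable.mul hFmeas).aestronglyMeasurable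
    · apply Filter.Eventually.of_forall
      intro t
      show ‖g t * F t‖ ≤ (Icc (-R) R).indicator (fun _ => C * F 0) t
      by_cases h : t ∈ Icc (-R) R
      · rw [indicator_of_mem h]
        rw [norm_mul]
        apply mul_le_mul (hC t h) ?_ (norm_nonneg _) hC0
        rw [Real.norm_eq_abs, abs_of_nonneg (hF0 t)]
        exact hFle t
      · rw [indicator_of_notMem h]
        have ht : R < |t| := by
          simp only [mem_Icc, not_and, not_le] at h
          rcases le_or_gt (-R) t with h2 | h2
          · have h3 := h h2
            rw [abs_of_pos (lt_trans hRpos h3)]; exact h3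
          · rw [abs_of_neg (by linarith : t < 0)]; linarith
        rw [hFsupp t ht]
        simp
  -- Fubini statements
  have fub : ∀ g : ℝ → ℝ, Continuous g → ∫ x in K, g (x 0) = ∫ t : ℝ, g t * F t := by
    intro g hg
    exact key_fubini m K hKm R hR hfin g hg
  -- mean zero
  have A1 : ∫ x in K, x 0 = 0 := by
    have h1 : ∫ x in K, x 0 = ∫ t : ℝ, t * F t := fub (fun t => t) continuous_id
    rw [h1]
    have hW := hGint (fun t => t) continuous_id
    have hsplit : (∫ t in Iic (0:ℝ), t * F t) + ∫ t in Ioi (0:ℝ), t * F t = ∫ t : ℝ, t * F t :=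
      intervalIntegral.integral_Iic_add_Ioi hW.integrableOn hW.integrableOn
    have hneg : ∫ t in Iic (0:ℝ), t * F t = - ∫ t in Ioi (0:ℝ), t * F t := by
      have h2 : ∫ t in Iic (0:ℝ), t * F t = ∫ t in Ioi (-(0:ℝ)), -(t * F (-t)) := by
        rw [← integral_comp_neg_Iic 0 (fun t => -(t * F (-t)))]
        congr 1
        funext t
        rw [neg_neg t]
        ring
      rw [h2, neg_zero, MeasureTheory.integral_neg]
      congr 2
      funext t
      rw [hFeven t]
    linarith [hsplit, hneg]
  -- positivity of second moment minus c
  have B : 0 ≤ ∫ x in K, ((x 0)^2 - c) := by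
    have h1 : ∫ x in K, ((x 0)^2 - c) = ∫ t : ℝ, (t^2 - c) * F t :=
      fub (fun t => t^2 - c) ((continuous_pow 2).sub continuous_const)
    rw [h1]
    have hW := hGint (fun t => t^2 - c) ((continuous_pow 2).sub continuous_const)
    have hsplit : (∫ t in Iic (0:ℝ), (t^2-c) * F t) + ∫ t in Ioi (0:ℝ), (t^2-c) * F t
        = ∫ t : ℝ, (t^2-c) * F t :=
      intervalIntegral.integral_Iic_add_Ioi hW.integrableOn hW.integrableOn
    have hpos : 0 ≤ ∫ t in Ioi (0:ℝ), (t^2-c) * F t := by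
      apply aux_half m F hF0 hFle
      · intro t ht
        have := hconeF 1 he1K t ht
        rwa [one_mul] at this
      · exact hW.integrableOn
    have hneg : 0 ≤ ∫ t in Iic (0:ℝ), (t^2-c) * F t := by
      have h2 : ∫ t in Iic (0:ℝ), (t^2-c) * F t = ∫ t in Ioi (-(0:ℝ)), (t^2-c) * F (-t) := by
        rw [← integral_comp_neg_Iic 0 (fun t => (t^2-c) * F (-t))]
        congr 1
        funext t
        rw [neg_neg t]
        ring
      rw [h2, neg_zero]
      apply aux_half m (fun t => F (-t)) (fun t => hF0 (-t))
        (fun t => by simpa using hFle (-t))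
      · intro t ht
        have := hconeF (-1) hne1K t ht
        rw [neg_one_mul] at this
        simpa using this
      · have : (fun t : ℝ => (t^2 - c) * F (-t)) = (fun t => (t^2-c) * F t) ∘ (fun t => -t) := by
          funext t; simp only [Function.comp_apply]; ring_nf
        rw [this]
        apply (hW.comp_neg).integrableOn
    linarith
  -- integrabilities on K
  have intsq : IntegrableOn (fun x : Fin (m+1) → ℝ => (x 0)^2) K := by
    apply ContinuousOn.integrableOn_compact hKcomp
    exact ((continuous_apply 0).pow 2).continuousOn
  have intc : IntegrableOn (fun _ : Fin (m+1) → ℝ => c) K :=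
    integrableOn_const (hKcomp.measure_lt_top.ne)
  have hsumB : c * (volume K).toReal ≤ ∫ x in K, (x 0)^2 := by
    have h1 : ∫ x in K, ((x 0)^2 - c) = (∫ x in K, (x 0)^2) - ∫ x in K, (c:ℝ) :=
      integral_sub intsq intc
    have h2 : ∫ x in K, (c:ℝ) = (volume K).toReal * c := by
      rw [setIntegral_const, smul_eq_mul]
      rfl
    rw [h1, h2] at B
    linarith
  -- final assembly
  have hμ : ∀ f : (Fin (m+1) → ℝ) → ℝ,
      ∫ x, f x ∂((volume K)⁻¹ • volume.restrict K) = (volume K).toReal⁻¹ * ∫ x in K, f x := by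
    intro f
    rw [integral_smul_measure, ENNReal.toReal_inv, smul_eq_mul]
  rw [hμ, hμ, A1]
  have hVpos : 0 < (volume K).toReal := ENNReal.toReal_pos hV0 hfin
  have hgoal : c ≤ (volume K).toReal⁻¹ * ∫ x in K, (x 0)^2 := by
    rw [← sub_nonneg]
    have hv : (volume K).toReal ≠ 0 := ne_of_gt hVpos
    have heq2 : (volume K).toReal⁻¹ * (∫ x in K, (x 0)^2) - c
        = (volume K).toReal⁻¹ * ((∫ x in K, (x 0)^2) - c * (volume K).toReal) := by
      field_simp
    rw [heq2]
    apply mul_nonneg (inv_nonneg.mpr hVpos.le)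
    linarith
  have hcast : (1:ℝ) / ((↑(m+1):ℝ) + 1)^2 = c := by
    rw [hc, div_pow, one_pow]
    congr 1
    push_cast
    ring
  rw [hcast]
  calc c ≤ (volume K).toReal⁻¹ * ∫ x in K, (x 0)^2 := hgoal
    _ = (volume K).toReal⁻¹ * (∫ x in K, (x 0)^2) - ((volume K).toReal⁻¹ * 0)^2 := by ring
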